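/- The Galois group of the polynomial X^4 + 8X + 12 over ℚ is isomorphic to the alternating group A_4 on four letters (of order 12). -/

import Mathlib

open Polynomial

namespace A4GalAux

noncomputable section

/-- The quartic `X^4 + 8X + 12`. -/
def Pq : ℚ[X] := X ^ 4 + C (8 : ℚ) * X + C (12 : ℚ)

lemma Pq_eq : Pq = X ^ 4 + 8 * X + 12 := by simp only [Pq, map_ofNat]

lemma Pq_natDegree : Pq.natDegree = 4 := by unfold Pq; compute_degree!

lemma Pq_monic : Pq.Monic := by unfold Pq; monicity!

lemma Pq_deriv : derivative Pq = 4 * X ^ 3 + 8 := by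
  rw [Pq_eq]; simp only [derivative_add, derivative_pow, derivative_X, derivative_mul,
    derivative_ofNat, derivative_X_pow]; ring_nf; simp [map_ofNat]; ring

lemma Pq_sep : Pq.Separable := by
  refine ⟨C (144⁻¹ : ℚ) * (4 * X ^ 2 - 8 * X + 16),
    C (144⁻¹ : ℚ) * (-(X ^ 3) + 2 * X ^ 2 - 4 * X - 6), ?_⟩
  have key : (4 * X ^ 2 - 8 * X + 16) * Pq
      + (-(X ^ 3) + 2 * X ^ 2 - 4 * X - 6) * (derivative Pq) = (144 : ℚ[X]) := by
    rw [Pq_deriv, Pq_eq]; ring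
  have h : (C (144⁻¹ : ℚ)) * 144 = 1 := by
    have h2 : (144 : ℚ[X]) = C (144 : ℚ) := by simp [map_ofNat]
    rw [h2, ← C_mul]; norm_num
  linear_combination C (144⁻¹ : ℚ) * key + h

/-- The splitting field. -/
abbrev Lf := Pq.SplittingField

lemma card_rootSet : Fintype.card (Pq.rootSet Lf) = 4 := by
  rw [← Pq_natDegree]; convert card_rootSet_eq_natDegree Pq_sep (SplittingField.splits Pq)
  · rfl
  · rfl
  · exact Subsingleton.elim _ _

/-- An enumeration of theroots. -/
def re : Pq.rootSet Lf ≃ Fin 4 := Fintype.equivFinOfCardEq card_rootSet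

/-- The four roots. -/
def v (i : Fin 4) : Lf := (re.symm i : Lf)

lemma v_inj : Function.Injective v := fun _ _ h => re.symm.injective (Subtype.ext h)

lemma aeval_v (i : Fin 4) : aeval (v i) Pq = 0 := (mem_rootSet.mp (re.symm i).2).2

lemma v_root (i : Fin 4) : (v i) ^ 4 + 8 * v i + 12 = 0 := by
  have h := aeval_v i
  rw [aeval_def] at h
  unfold Pq at h
  simp [map_ofNat] at h
  convert h using 3 <;> rfl

/-- The Galois group mapped into `Perm (Fin 4)`. -/
def Pi : Pq.Gal →* Equiv.Perm (Fin 4) :=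
  { toFun := fun σ => re.permCongr (MulAction.toPermHom Pq.Gal (Pq.rootSet Lf) σ)
    map_one' := by ext i; simp
    map_mul' := fun σ τ => by ext i; simp [Equiv.Perm.mul_apply, mul_smul] }

lemma coe_smul (σ : Pq.Gal) (x : Pq.rootSet Lf) : ((σ • x : Pq.rootSet Lf) : Lf) = σ x := rfl

lemma v_compat (σ : Pq.Gal) (i : Fin 4) : v (Pi σ i) = σ (v i) := by
  show ((re.symm (re.permCongr _ i)) : Lf) = _
  rw [Equiv.permCongr_apply, Equiv.symm_apply_apply]
  exact coe_smul σ (re.symm i)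

lemma Pi_inj : Function.Injective Pi := by
  intro σ τ h
  apply Polynomial.Gal.ext
  intro x hx
  have h1 : v (Pi σ (re ⟨x, hx⟩)) = v (Pi τ (re ⟨x, hx⟩)) := by rw [h]
  have hv : v (re ⟨x, hx⟩) = x := by simp [v]
  rwa [v_compat, v_compat, hv] at h1

/- ### Cauchy module relations -/

lemma cauchy3 {i j : Fin 4} (hij : i ≠ j) :
    v i ^ 3 + v i ^ 2 * v j + v i * v j ^ 2 + v j ^ 3 + 8 = 0 := by
  have h : (v i - v j) * (v i ^ 3 + v i ^ 2 * v j + v i * v j ^ 2 + v j ^ 3 + 8) = 0 := by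
    linear_combination (v_root i) - (v_root j)
  exact (mul_eq_zero.mp h).resolve_left (sub_ne_zero.mpr fun h' => hij (v_inj h'))

lemma cauchy2 {i j k : Fin 4} (hij : i ≠ j) (hik : i ≠ k) (hjk : j ≠ k) :
    v i ^ 2 + v i * v j + v j ^ 2 + v i * v k + v j * v k + v k ^ 2 = 0 := by
  have h : (v i - v j) *
      (v i ^ 2 + v i * v j + v j ^ 2 + v i * v k + v j * v k + v k ^ 2) = 0 := by
    linear_combination (cauchy3 hik) - (cauchy3 hjk)
  exact (mul_eq_zero.mp h).resolve_left (sub_ne_zero.mpr fun h' => hij (v_inj h'))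

lemma cauchy1 : v 0 + v 1 + v 2 + v 3 = 0 := by
  have h : (v 0 - v 1) * (v 0 + v 1 + v 2 + v 3) = 0 := by
    linear_combination (cauchy2 (i := 0) (j := 2) (k := 3) (by decide) (by decide) (by decide)) -
      (cauchy2 (i := 1) (j := 2) (k := 3) (by decide) (by decide) (by decide))
  exact (mul_eq_zero.mp h).resolve_left
    (sub_ne_zero.mpr fun h' => (by decide : (0 : Fin 4) ≠ 1) (v_inj h'))

lemma frel1 : v 0 + v 1 + v 2 + v 3 = 0 := cauchy1
lemma frel2 : v 1 ^ 2 + v 1 * v 2 + v 2 ^ 2 + v 1 * v 3 + v 2 * v 3 + v 3 ^ 2 = 0 :=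
  cauchy2 (by decide) (by decide) (by decide)
lemma frel3 : v 2 ^ 3 + v 2 ^ 2 * v 3 + v 2 * v 3 ^ 2 + v 3 ^ 3 + 8 = 0 :=
  cauchy3 (by decide)
lemma frel4 : v 3 ^ 4 + 8 * v 3 + 12 = 0 := v_root 3



/- ### The discriminant argument -/

lemma vander_expand {L : Type*} [Field L] (w : Fin 4 → L) :
    (Matrix.vandermonde w).det =
      (w 1 - w 0) * (w 2 - w 0) * (w 3 - w 0) * (w 2 - w 1) * (w 3 - w 1) * (w 3 - w 2) := by
  rw [Matrix.det_vandermonde, Fin.prod_univ_four]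
  rw [show (Finset.Ioi (0 : Fin 4)) = {1, 2, 3} by decide,
      show (Finset.Ioi (1 : Fin 4)) = {2, 3} by decide,
      show (Finset.Ioi (2 : Fin 4)) = {3} by decide,
      show (Finset.Ioi (3 : Fin 4)) = ∅ by decide]
  rw [Finset.prod_insert (by decide), Finset.prod_pair (by decide), Finset.prod_pair (by decide),
      Finset.prod_singleton, Finset.prod_empty]
  ring

/-- The square root of the discriminant. -/
def δ : Lf := (Matrix.vandermonde v).det

set_option maxHeartbeats 4000000 in
lemma δ_sq : δ ^ 2 = 331776 := by
  rw [δ, vander_expand]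
  linear_combination ((v 0)^5*(v 1)^4*(v 2)^2 + -2*(v 0)^5*(v 1)^4*(v 2)*(v 3) + (v 0)^5*(v 1)^4*(v 3)^2 + -2*(v 0)^5*(v 1)^3*(v 2)^3 + 2*(v 0)^5*(v 1)^3*(v 2)^2*(v 3) + 2*(v 0)^5*(v 1)^3*(v 2)*(v 3)^2 + -2*(v 0)^5*(v 1)^3*(v 3)^3 + (v 0)^5*(v 1)^2*(v 2)^4 + 2*(v 0)^5*(v 1)^2*(v 2)^3*(v 3) + -6*(v 0)^5*(v 1)^2*(v 2)^2*(v 3)^2 + 2*(v 0)^5*(v 1)^2*(v 2)*(v 3)^3 + (v 0)^5*(v 1)^2*(v 3)^4 + -2*(v 0)^5*(v 1)*(v 2)^4*(v 3) + 2*(v 0)^5*(v 1)*(v 2)^3*(v 3)^2 + 2*(v 0)^5*(v 1)*(v 2)^2*(v 3)^3 + -2*(v 0)^5*(v 1)*(v 2)*(v 3)^4 + (v 0)^5*(v 2)^4*(v 3)^2 + -2*(v 0)^5*(v 2)^3*(v 3)^3 + (v 0)^5*(v 2)^2*(v 3)^4 + -3*(v 0)^4*(v 1)^5*(v 2)^2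 + 6*(v 0)^4*(v 1)^5*(v 2)*(v 3) + -3*(v 0)^4*(v 1)^5*(v 3)^2 + 3*(v 0)^4*(v 1)^4*(v 2)^3 + -3*(v 0)^4*(v 1)^4*(v 2)^2*(v 3) + -3*(v 0)^4*(v 1)^4*(v 2)*(v 3)^2 + 3*(v 0)^4*(v 1)^4*(v 3)^3 + 3*(v 0)^4*(v 1)^3*(v 2)^4 + -6*(v 0)^4*(v 1)^3*(v 2)^3*(v 3) + 6*(v 0)^4*(v 1)^3*(v 2)^2*(v 3)^2 + -6*(v 0)^4*(v 1)^3*(v 2)*(v 3)^3 + 3*(v 0)^4*(v 1)^3*(v 3)^4 + -3*(v 0)^4*(v 1)^2*(v 2)^5 + -3*(v 0)^4*(v 1)^2*(v 2)^4*(v 3) + 6*(v 0)^4*(v 1)^2*(v 2)^3*(v 3)^2 + 6*(v 0)^4*(v 1)^2*(v 2)^2*(v 3)^3 + -3*(v 0)^4*(v 1)^2*(v 2)*(v 3)^4 + -3*(v 0)^4*(v 1)^2*(v 3)^5 + 6*(v 0)^4*(v 1)*(v 2)^5*(v 3) + -3*(v 0)^4*(v 1)*(v 2)^4*(v 3)^2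 + -6*(v 0)^4*(v 1)*(v 2)^3*(v 3)^3 + -3*(v 0)^4*(v 1)*(v 2)^2*(v 3)^4 + 6*(v 0)^4*(v 1)*(v 2)*(v 3)^5 + -3*(v 0)^4*(v 2)^5*(v 3)^2 + 3*(v 0)^4*(v 2)^4*(v 3)^3 + 3*(v 0)^4*(v 2)^3*(v 3)^4 + -3*(v 0)^4*(v 2)^2*(v 3)^5 + 4*(v 0)^3*(v 1)^6*(v 2)^2 + -8*(v 0)^3*(v 1)^6*(v 2)*(v 3) + 4*(v 0)^3*(v 1)^6*(v 3)^2 + 2*(v 0)^3*(v 1)^5*(v 2)^3 + -2*(v 0)^3*(v 1)^5*(v 2)^2*(v 3) + -2*(v 0)^3*(v 1)^5*(v 2)*(v 3)^2 + 2*(v 0)^3*(v 1)^5*(v 3)^3 + -12*(v 0)^3*(v 1)^4*(v 2)^4 + 10*(v 0)^3*(v 1)^4*(v 2)^3*(v 3) + 4*(v 0)^3*(v 1)^4*(v 2)^2*(v 3)^2 + 10*(v 0)^3*(v 1)^4*(v 2)*(v 3)^3 + -12*(v 0)^3*(v 1)^4*(v 3)^4 + 2*(v 0)^3*(v 1)^3*(v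 2)^5 + 10*(v 0)^3*(v 1)^3*(v 2)^4*(v 3) + -12*(v 0)^3*(v 1)^3*(v 2)^3*(v 3)^2 + -12*(v 0)^3*(v 1)^3*(v 2)^2*(v 3)^3 + 10*(v 0)^3*(v 1)^3*(v 2)*(v 3)^4 + 2*(v 0)^3*(v 1)^3*(v 3)^5 + 4*(v 0)^3*(v 1)^2*(v 2)^6 + -2*(v 0)^3*(v 1)^2*(v 2)^5*(v 3) + 4*(v 0)^3*(v 1)^2*(v 2)^4*(v 3)^2 + -12*(v 0)^3*(v 1)^2*(v 2)^3*(v 3)^3 + 4*(v 0)^3*(v 1)^2*(v 2)^2*(v 3)^4 + -2*(v 0)^3*(v 1)^2*(v 2)*(v 3)^5 + 4*(v 0)^3*(v 1)^2*(v 3)^6 + -8*(v 0)^3*(v 1)*(v 2)^6*(v 3) + -2*(v 0)^3*(v 1)*(v 2)^5*(v 3)^2 + 10*(v 0)^3*(v 1)*(v 2)^4*(v 3)^3 + 10*(v 0)^3*(v 1)*(v 2)^3*(v 3)^4 + -2*(v 0)^3*(v 1)*(v 2)^2*(v 3)^5 + -8*(v 0)^3*(v 1)*(v 2)*(v 3)^6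 + 4*(v 0)^3*(v 2)^6*(v 3)^2 + 2*(v 0)^3*(v 2)^5*(v 3)^3 + -12*(v 0)^3*(v 2)^4*(v 3)^4 + 2*(v 0)^3*(v 2)^3*(v 3)^5 + 4*(v 0)^3*(v 2)^2*(v 3)^6 + -4*(v 0)^2*(v 1)^7*(v 2)^2 + 8*(v 0)^2*(v 1)^7*(v 2)*(v 3) + -4*(v 0)^2*(v 1)^7*(v 3)^2 + -8*(v 0)^2*(v 1)^6*(v 2)^3 + 8*(v 0)^2*(v 1)^6*(v 2)^2*(v 3) + 8*(v 0)^2*(v 1)^6*(v 2)*(v 3)^2 + -8*(v 0)^2*(v 1)^6*(v 3)^3 + 12*(v 0)^2*(v 1)^5*(v 2)^4 + -14*(v 0)^2*(v 1)^5*(v 2)^3*(v 3) + 4*(v 0)^2*(v 1)^5*(v 2)^2*(v 3)^2 + -14*(v 0)^2*(v 1)^5*(v 2)*(v 3)^3 + 12*(v 0)^2*(v 1)^5*(v 3)^4 + 12*(v 0)^2*(v 1)^4*(v 2)^5 + -4*(v 0)^2*(v 1)^4*(v 2)^4*(v 3) + -8*(v 0)^2*(v 1)^4*(v 2)^3*(v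 3)^2 + -8*(v 0)^2*(v 1)^4*(v 2)^2*(v 3)^3 + -4*(v 0)^2*(v 1)^4*(v 2)*(v 3)^4 + 12*(v 0)^2*(v 1)^4*(v 3)^5 + -8*(v 0)^2*(v 1)^3*(v 2)^6 + -14*(v 0)^2*(v 1)^3*(v 2)^5*(v 3) + -8*(v 0)^2*(v 1)^3*(v 2)^4*(v 3)^2 + 60*(v 0)^2*(v 1)^3*(v 2)^3*(v 3)^3 + -8*(v 0)^2*(v 1)^3*(v 2)^2*(v 3)^4 + -14*(v 0)^2*(v 1)^3*(v 2)*(v 3)^5 + -8*(v 0)^2*(v 1)^3*(v 3)^6 + -4*(v 0)^2*(v 1)^2*(v 2)^7 + 8*(v 0)^2*(v 1)^2*(v 2)^6*(v 3) + 4*(v 0)^2*(v 1)^2*(v 2)^5*(v 3)^2 + -8*(v 0)^2*(v 1)^2*(v 2)^4*(v 3)^3 + -8*(v 0)^2*(v 1)^2*(v 2)^3*(v 3)^4 + 4*(v 0)^2*(v 1)^2*(v 2)^2*(v 3)^5 + 8*(v 0)^2*(v 1)^2*(v 2)*(v 3)^6 + -4*(v 0)^2*(v 1)^2*(v 3)^7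 + 8*(v 0)^2*(v 1)*(v 2)^7*(v 3) + 8*(v 0)^2*(v 1)*(v 2)^6*(v 3)^2 + -14*(v 0)^2*(v 1)*(v 2)^5*(v 3)^3 + -4*(v 0)^2*(v 1)*(v 2)^4*(v 3)^4 + -14*(v 0)^2*(v 1)*(v 2)^3*(v 3)^5 + 8*(v 0)^2*(v 1)*(v 2)^2*(v 3)^6 + 8*(v 0)^2*(v 1)*(v 2)*(v 3)^7 + -4*(v 0)^2*(v 2)^7*(v 3)^2 + -8*(v 0)^2*(v 2)^6*(v 3)^3 + 12*(v 0)^2*(v 2)^5*(v 3)^4 + 12*(v 0)^2*(v 2)^4*(v 3)^5 + -8*(v 0)^2*(v 2)^3*(v 3)^6 + -4*(v 0)^2*(v 2)^2*(v 3)^7 + 4*(v 0)*(v 1)^8*(v 2)^2 + -8*(v 0)*(v 1)^8*(v 2)*(v 3) + 4*(v 0)*(v 1)^8*(v 3)^2 + 12*(v 0)*(v 1)^7*(v 2)^3 + -12*(v 0)*(v 1)^7*(v 2)^2*(v 3) + -12*(v 0)*(v 1)^7*(v 2)*(v 3)^2 + 12*(v 0)*(v 1)^7*(v 3)^3 + -3*(v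 0)*(v 1)^6*(v 2)^4 + 16*(v 0)*(v 1)^6*(v 2)^3*(v 3) + -26*(v 0)*(v 1)^6*(v 2)^2*(v 3)^2 + 16*(v 0)*(v 1)^6*(v 2)*(v 3)^3 + -3*(v 0)*(v 1)^6*(v 3)^4 + -26*(v 0)*(v 1)^5*(v 2)^5 + 4*(v 0)*(v 1)^5*(v 2)^4*(v 3) + 22*(v 0)*(v 1)^5*(v 2)^3*(v 3)^2 + 22*(v 0)*(v 1)^5*(v 2)^2*(v 3)^3 + 4*(v 0)*(v 1)^5*(v 2)*(v 3)^4 + -26*(v 0)*(v 1)^5*(v 3)^5 + -3*(v 0)*(v 1)^4*(v 2)^6 + 4*(v 0)*(v 1)^4*(v 2)^5*(v 3) + 24*(v 0)*(v 1)^4*(v 2)^4*(v 3)^2 + -50*(v 0)*(v 1)^4*(v 2)^3*(v 3)^3 + 24*(v 0)*(v 1)^4*(v 2)^2*(v 3)^4 + 4*(v 0)*(v 1)^4*(v 2)*(v 3)^5 + -3*(v 0)*(v 1)^4*(v 3)^6 + 12*(v 0)*(v 1)^3*(v 2)^7 + 16*(v 0)*(v 1)^3*(v 2)^6*(v 3)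 + 22*(v 0)*(v 1)^3*(v 2)^5*(v 3)^2 + -50*(v 0)*(v 1)^3*(v 2)^4*(v 3)^3 + -50*(v 0)*(v 1)^3*(v 2)^3*(v 3)^4 + 22*(v 0)*(v 1)^3*(v 2)^2*(v 3)^5 + 16*(v 0)*(v 1)^3*(v 2)*(v 3)^6 + 12*(v 0)*(v 1)^3*(v 3)^7 + 4*(v 0)*(v 1)^2*(v 2)^8 + -12*(v 0)*(v 1)^2*(v 2)^7*(v 3) + -26*(v 0)*(v 1)^2*(v 2)^6*(v 3)^2 + 22*(v 0)*(v 1)^2*(v 2)^5*(v 3)^3 + 24*(v 0)*(v 1)^2*(v 2)^4*(v 3)^4 + 22*(v 0)*(v 1)^2*(v 2)^3*(v 3)^5 + -26*(v 0)*(v 1)^2*(v 2)^2*(v 3)^6 + -12*(v 0)*(v 1)^2*(v 2)*(v 3)^7 + 4*(v 0)*(v 1)^2*(v 3)^8 + -8*(v 0)*(v 1)*(v 2)^8*(v 3) + -12*(v 0)*(v 1)*(v 2)^7*(v 3)^2 + 16*(v 0)*(v 1)*(v 2)^6*(v 3)^3 + 4*(v 0)*(v 1)*(v 2)^5*(v 3)^4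 + 4*(v 0)*(v 1)*(v 2)^4*(v 3)^5 + 16*(v 0)*(v 1)*(v 2)^3*(v 3)^6 + -12*(v 0)*(v 1)*(v 2)^2*(v 3)^7 + -8*(v 0)*(v 1)*(v 2)*(v 3)^8 + 4*(v 0)*(v 2)^8*(v 3)^2 + 12*(v 0)*(v 2)^7*(v 3)^3 + -3*(v 0)*(v 2)^6*(v 3)^4 + -26*(v 0)*(v 2)^5*(v 3)^5 + -3*(v 0)*(v 2)^4*(v 3)^6 + 12*(v 0)*(v 2)^3*(v 3)^7 + 4*(v 0)*(v 2)^2*(v 3)^8 + -4*(v 1)^9*(v 2)^2 + 8*(v 1)^9*(v 2)*(v 3) + -4*(v 1)^9*(v 3)^2 + -16*(v 1)^8*(v 2)^3 + 16*(v 1)^8*(v 2)^2*(v 3) + 16*(v 1)^8*(v 2)*(v 3)^2 + -16*(v 1)^8*(v 3)^3 + -9*(v 1)^7*(v 2)^4 + -16*(v 1)^7*(v 2)^3*(v 3) + 50*(v 1)^7*(v 2)^2*(v 3)^2 + -16*(v 1)^7*(v 2)*(v 3)^3 + -9*(v 1)^7*(v 3)^4 + 29*(v 1)^6*(v 2)^5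 + -19*(v 1)^6*(v 2)^4*(v 3) + -10*(v 1)^6*(v 2)^3*(v 3)^2 + -10*(v 1)^6*(v 2)^2*(v 3)^3 + -19*(v 1)^6*(v 2)*(v 3)^4 + 29*(v 1)^6*(v 3)^5 + 29*(v 1)^5*(v 2)^6 + 22*(v 1)^5*(v 2)^5*(v 3) + -52*(v 1)^5*(v 2)^4*(v 3)^2 + 2*(v 1)^5*(v 2)^3*(v 3)^3 + -52*(v 1)^5*(v 2)^2*(v 3)^4 + 22*(v 1)^5*(v 2)*(v 3)^5 + 29*(v 1)^5*(v 3)^6 + -9*(v 1)^4*(v 2)^7 + -19*(v 1)^4*(v 2)^6*(v 3) + -52*(v 1)^4*(v 2)^5*(v 3)^2 + 80*(v 1)^4*(v 2)^4*(v 3)^3 + 80*(v 1)^4*(v 2)^3*(v 3)^4 + -52*(v 1)^4*(v 2)^2*(v 3)^5 + -19*(v 1)^4*(v 2)*(v 3)^6 + -9*(v 1)^4*(v 3)^7 + -16*(v 1)^3*(v 2)^8 + -16*(v 1)^3*(v 2)^7*(v 3) + -10*(v 1)^3*(v 2)^6*(v 3)^2 + 2*(v 1)^3*(v 2)^5*(v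 3)^3 + 80*(v 1)^3*(v 2)^4*(v 3)^4 + 2*(v 1)^3*(v 2)^3*(v 3)^5 + -10*(v 1)^3*(v 2)^2*(v 3)^6 + -16*(v 1)^3*(v 2)*(v 3)^7 + -16*(v 1)^3*(v 3)^8 + -4*(v 1)^2*(v 2)^9 + 16*(v 1)^2*(v 2)^8*(v 3) + 50*(v 1)^2*(v 2)^7*(v 3)^2 + -10*(v 1)^2*(v 2)^6*(v 3)^3 + -52*(v 1)^2*(v 2)^5*(v 3)^4 + -52*(v 1)^2*(v 2)^4*(v 3)^5 + -10*(v 1)^2*(v 2)^3*(v 3)^6 + 50*(v 1)^2*(v 2)^2*(v 3)^7 + 16*(v 1)^2*(v 2)*(v 3)^8 + -4*(v 1)^2*(v 3)^9 + 8*(v 1)*(v 2)^9*(v 3) + 16*(v 1)*(v 2)^8*(v 3)^2 + -16*(v 1)*(v 2)^7*(v 3)^3 + -19*(v 1)*(v 2)^6*(v 3)^4 + 22*(v 1)*(v 2)^5*(v 3)^5 + -19*(v 1)*(v 2)^4*(v 3)^6 + -16*(v 1)*(v 2)^3*(v 3)^7 + 16*(v 1)*(v 2)^2*(v 3)^8 +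 8*(v 1)*(v 2)*(v 3)^9 + -4*(v 2)^9*(v 3)^2 + -16*(v 2)^8*(v 3)^3 + -9*(v 2)^7*(v 3)^4 + 29*(v 2)^6*(v 3)^5 + 29*(v 2)^5*(v 3)^6 + -9*(v 2)^4*(v 3)^7 + -16*(v 2)^3*(v 3)^8 + -4*(v 2)^2*(v 3)^9) * frel1 + (4*(v 1)^8*(v 2)^2 + -8*(v 1)^8*(v 2)*(v 3) + 4*(v 1)^8*(v 3)^2 + 16*(v 1)^7*(v 2)^3 + -16*(v 1)^7*(v 2)^2*(v 3) + -16*(v 1)^7*(v 2)*(v 3)^2 + 16*(v 1)^7*(v 3)^3 + 5*(v 1)^6*(v 2)^4 + 20*(v 1)^6*(v 2)^3*(v 3) + -50*(v 1)^6*(v 2)^2*(v 3)^2 + 20*(v 1)^6*(v 2)*(v 3)^3 + 5*(v 1)^6*(v 3)^4 + -41*(v 1)^5*(v 2)^5 + 19*(v 1)^5*(v 2)^4*(v 3) + 22*(v 1)^5*(v 2)^3*(v 3)^2 + 22*(v 1)^5*(v 2)^2*(v 3)^3 + 19*(v 1)^5*(v 2)*(v 3)^4 + -41*(v 1)^5*(v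 3)^5 + -22*(v 1)^4*(v 2)^6 + -35*(v 1)^4*(v 2)^5*(v 3) + 66*(v 1)^4*(v 2)^4*(v 3)^2 + -18*(v 1)^4*(v 2)^3*(v 3)^3 + 66*(v 1)^4*(v 2)^2*(v 3)^4 + -35*(v 1)^4*(v 2)*(v 3)^5 + -22*(v 1)^4*(v 3)^6 + 43*(v 1)^3*(v 2)^7 + 47*(v 1)^3*(v 2)^6*(v 3) + 49*(v 1)^3*(v 2)^5*(v 3)^2 + -139*(v 1)^3*(v 2)^4*(v 3)^3 + -139*(v 1)^3*(v 2)^3*(v 3)^4 + 49*(v 1)^3*(v 2)^2*(v 3)^5 + 47*(v 1)^3*(v 2)*(v 3)^6 + 43*(v 1)^3*(v 3)^7 + 4*(v 1)^2*(v 2)^8 + 11*(v 1)^2*(v 2)^7*(v 3) + -23*(v 1)^2*(v 2)^6*(v 3)^2 + 49*(v 1)^2*(v 2)^5*(v 3)^3 + -82*(v 1)^2*(v 2)^4*(v 3)^4 + 49*(v 1)^2*(v 2)^3*(v 3)^5 + -23*(v 1)^2*(v 2)^2*(v 3)^6 + 11*(v 1)^2*(v 2)*(v 3)^7 + 4*(v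 1)^2*(v 3)^8 + -27*(v 1)*(v 2)^9 + -89*(v 1)*(v 2)^8*(v 3) + -151*(v 1)*(v 2)^7*(v 3)^2 + 33*(v 1)*(v 2)^6*(v 3)^3 + 234*(v 1)*(v 2)^5*(v 3)^4 + 234*(v 1)*(v 2)^4*(v 3)^5 + 33*(v 1)*(v 2)^3*(v 3)^6 + -151*(v 1)*(v 2)^2*(v 3)^7 + -89*(v 1)*(v 2)*(v 3)^8 + -27*(v 1)*(v 3)^9 + 27*(v 2)^10 + 81*(v 2)^9*(v 3) + 166*(v 2)^8*(v 3)^2 + 57*(v 2)^7*(v 3)^3 + -129*(v 2)^6*(v 3)^4 + -404*(v 2)^5*(v 3)^5 + -129*(v 2)^4*(v 3)^6 + 57*(v 2)^3*(v 3)^7 + 166*(v 2)^2*(v 3)^8 + 81*(v 2)*(v 3)^9 + 27*(v 3)^10) * frel2 + (-27*(v 2)^9 + -81*(v 2)^8*(v 3) + -162*(v 2)^7*(v 3)^2 + -14*(v 2)^6*(v 3)^3 + 216*(v 2)^6 + 188*(v 2)^5*(v 3)^4 + 432*(v 2)^5*(v 3) + 444*(v 2)^4*(v 3)^5 + 648*(v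 2)^4*(v 3)^2 + -14*(v 2)^3*(v 3)^6 + -1184*(v 2)^3*(v 3)^3 + -1728*(v 2)^3 + -162*(v 2)^2*(v 3)^7 + -1400*(v 2)^2*(v 3)^4 + -1728*(v 2)^2*(v 3) + -337*(v 2)*(v 3)^8 + -1616*(v 2)*(v 3)^5 + -1728*(v 2)*(v 3)^2 + 229*(v 3)^9 + 4312*(v 3)^6 + 14656*(v 3)^3 + 13824) * frel3 + (-256*(v 3)^8 + -4096*(v 3)^5 + 3072*(v 3)^4 + -16384*(v 3)^2 + 24576*(v 3) + -36864) * frel4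

lemma smul_δ (σ : Pq.Gal) : σ δ = ((Equiv.Perm.sign (Pi σ) : ℤ) : Lf) * δ := by
  have h1 : σ δ = (Matrix.vandermonde (v ∘ (Pi σ))).det := by
    rw [δ, vander_expand, vander_expand]
    simp only [Function.comp_apply, map_mul, map_sub, v_compat]
  have h2 : Matrix.vandermonde (v ∘ (Pi σ)) = (Matrix.vandermonde v).submatrix (Pi σ) id := by
    ext i j; simp [Matrix.vandermonde]
  rw [h1, h2, Matrix.det_permute, δ]

lemma Pi_mem_alternating (σ : Pq.Gal) : Pi σ ∈ alternatingGroup (Fin 4) := by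
  haveI : CharZero Lf := charZero_of_injective_algebraMap (algebraMap ℚ Lf).injective
  rw [Equiv.Perm.mem_alternatingGroup]
  rcases Int.units_eq_one_or (Equiv.Perm.sign (Pi σ)) with h | h
  · exact h
  exfalso
  have hδne : δ ≠ 0 := by
    intro h0
    have := δ_sq
    rw [h0] at this
    norm_num at this
  have hs := smul_δ σ
  rw [h] at hs
  have hcases : δ = 576 ∨ δ = -576 := by
    have hz : (δ - 576) * (δ + 576) = 0 := by linear_combination δ_sq
    rcases mul_eq_zero.mp hz with h' | h'
    · exact Or.inl (by linear_combination h')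
    · exact Or.inr (by linear_combination h')
  have hfix : σ δ = δ := by
    rcases hcases with h' | h'
    · rw [h']; exact map_ofNat σ 576
    · rw [h', map_neg]; rw [map_ofNat σ 576]
  rw [hfix] at hs
  apply hδne
  have : (2 : Lf) * δ = 0 := by push_cast at hs; linear_combination hs
  rcases mul_eq_zero.mp this with h' | h'
  · norm_num at h'
  · exact h'



/- ### no rational roots -/

lemma no_rat_root_quartic (r : ℚ) : r ^ 4 + 8 * r + 12 ≠ 0 := by
  intro h
  have hm : (X ^ 4 + 8 * X + 12 : ℤ[X]).Monic := by monicity!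
  have ha : aeval r (X ^ 4 + 8 * X + 12 : ℤ[X]) = 0 := by
    simp only [map_add, map_mul, map_pow, aeval_X, map_ofNat]
    exact_mod_cast h
  obtain ⟨n, hn, hdvd⟩ := exists_integer_of_is_root_of_monic hm ha
  have hc0 : (X ^ 4 + 8 * X + 12 : ℤ[X]).coeff 0 = 12 := by
    simp [coeff_add, coeff_X_pow]
  rw [hc0] at hdvd
  rw [hn, algebraMap_int_eq, eq_intCast] at h
  have hZ : n ^ 4 + 8 * n + 12 = 0 := by exact_mod_cast h
  have hb : n.natAbs ∣ 12 := by
    have := Int.natAbs_dvd_natAbs.mpr hdvd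
    norm_num at this
    exact this
  have hb2 : n.natAbs ≤ 12 := Nat.le_of_dvd (by norm_num) hb
  have hb3 : -12 ≤ n ∧ n ≤ 12 := by omega
  obtain ⟨hl, hu⟩ := hb3
  interval_cases n <;> norm_num at hZ

lemma no_rat_root_cub (r : ℚ) : r ^ 3 - 48 * r - 64 ≠ 0 := by
  intro h
  have hm : (X ^ 3 - 48 * X - 64 : ℤ[X]).Monic := by monicity!
  have ha : aeval r (X ^ 3 - 48 * X - 64 : ℤ[X]) = 0 := by
    simp only [map_sub, map_mul, map_pow, aeval_X, map_ofNat]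
    exact_mod_cast h
  obtain ⟨n, hn, hdvd⟩ := exists_integer_of_is_root_of_monic hm ha
  have hc0 : (X ^ 3 - 48 * X - 64 : ℤ[X]).coeff 0 = -64 := by
    simp [coeff_sub, coeff_X_pow]
  rw [hc0] at hdvd
  rw [hn, algebraMap_int_eq, eq_intCast] at h
  have hZ : n ^ 3 - 48 * n - 64 = 0 := by exact_mod_cast h
  have hb : n.natAbs ∣ 64 := by
    have h2 : n ∣ 64 := dvd_neg.mp hdvd
    have := Int.natAbs_dvd_natAbs.mpr h2
    norm_num at this
    exact this
  have hb2 : n.natAbs ≤ 64 := Nat.le_of_dvd (by norm_num) hb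
  have hl : -64 ≤ n := by omega
  have hu : n ≤ 64 := by omega
  interval_cases n <;> norm_num at hZ

/- ### the resolvent cubic -/

def cub : ℚ[X] := X ^ 3 - 48 * X - 64

lemma cub_monic : cub.Monic := by unfold cub; monicity!

lemma cub_deg : cub.natDegree = 3 := by unfold cub; compute_degree!

lemma cub_irr : Irreducible cub := by
  rw [irreducible_iff_roots_eq_zero_of_degree_le_three (by rw [cub_deg]; norm_num)
    (by rw [cub_deg])]
  rw [Multiset.eq_zero_iff_forall_notMem]
  intro r hr
  have h2 := (mem_roots cub_monic.ne_zero).mp hr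
  rw [IsRoot.def, cub] at h2
  simp only [eval_sub, eval_mul, eval_pow, eval_X, eval_ofNat] at h2
  exact no_rat_root_cub r h2

lemma three_dvd_finrank : 3 ∣ Module.finrank ℚ Lf := by
  set θ := v 0 * v 1 + v 2 * v 3 with hθ
  have hint : IsIntegral ℚ θ := IsIntegral.of_finite ℚ _
  have haev : aeval θ cub = 0 := by
    have hx : aeval θ cub = θ ^ 3 - 48 * θ - 64 := by simp [cub, map_ofNat]
    rw [hx, hθ]
    linear_combination ((v 0)^2*(v 1)^3 + -1*(v 0)*(v 1)^4 + -1*(v 0)*(v 1)^3*(v 2) + -1*(v 0)*(v 1)^3*(v 3) + 3*(v 0)*(v 1)^2*(v 2)*(v 3) + (v 1)^5 + 2*(v 1)^4*(v 2) + 2*(v 1)^4*(v 3) + (v 1)^3*(v 2)^2 + -1*(v 1)^3*(v 2)*(v 3) + (v 1)^3*(v 3)^2 + -3*(v 1)^2*(v 2)^2*(v 3) + -3*(v 1)^2*(v 2)*(v 3)^2 + 3*(v 1)*(v 2)^2*(v 3)^2 + -48*(v 1)) * frel1 + (-1*(v 1)^4 + -2*(v 1)^3*(v 2) + -2*(v 1)^3*(v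 3) + 2*(v 1)^2*(v 2)*(v 3) + (v 1)*(v 2)^3 + 5*(v 1)*(v 2)^2*(v 3) + 5*(v 1)*(v 2)*(v 3)^2 + (v 1)*(v 3)^3 + -1*(v 2)^4 + -5*(v 2)^3*(v 3) + -9*(v 2)^2*(v 3)^2 + -5*(v 2)*(v 3)^3 + -1*(v 3)^4 + 48) * frel2 + ((v 2)^3 + 5*(v 2)^2*(v 3) + 9*(v 2)*(v 3)^2 + 5*(v 3)^3 + -8) * frel3 + (-4*(v 2)^2 + -8*(v 2)*(v 3) + -4*(v 3)^2) * frel4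
  have hmin : minpoly ℚ θ = cub := (minpoly.eq_of_irreducible_of_monic cub_irr haev cub_monic).symm
  refine ⟨Module.finrank (IntermediateField.adjoin ℚ {θ}) Lf, ?_⟩
  rw [← Module.finrank_mul_finrank ℚ (IntermediateField.adjoin ℚ {θ}) Lf,
    IntermediateField.adjoin.finrank hint, hmin, cub_deg]



/- ### excluding degree 3 -/

lemma finrank_ne_three : Module.finrank ℚ Lf ≠ 3 := by
  intro h3
  have hint : IsIntegral ℚ (v 0) := IsIntegral.of_finite ℚ _
  have hdvdP : minpoly ℚ (v 0) ∣ Pq := minpoly.dvd ℚ _ (aeval_v 0)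
  have hdeg3 : (minpoly ℚ (v 0)).natDegree ∣ 3 := by
    have hmm := Module.finrank_mul_finrank ℚ (IntermediateField.adjoin ℚ {v 0}) Lf
    rw [IntermediateField.adjoin.finrank hint, h3] at hmm
    exact ⟨_, hmm.symm⟩
  obtain ⟨q, hq⟩ := hdvdP
  have hmne : minpoly ℚ (v 0) ≠ 0 := minpoly.ne_zero hint
  have hqne : q ≠ 0 := by
    intro h0
    rw [h0, mul_zero] at hq
    exact Pq_monic.ne_zero hq
  rcases (Nat.prime_three.eq_one_or_self_of_dvd _ hdeg3) with h1 | h3'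
  · obtain ⟨r, hr⟩ := minpoly.natDegree_eq_one_iff.mp h1
    have hroot := v_root 0
    rw [← hr] at hroot
    have hmap : algebraMap ℚ Lf (r ^ 4 + 8 * r + 12) = 0 := by
      simpa only [map_add, map_pow, map_mul, map_ofNat] using hroot
    exact no_rat_root_quartic r ((map_eq_zero_iff _ (algebraMap ℚ Lf).injective).mp hmap)
  · have hdq : q.natDegree = 1 := by
      have hnd := natDegree_mul hmne hqne
      rw [← hq, Pq_natDegree, h3'] at hnd
      omega
    have hqmonic : q.Monic := (minpoly.monic hint).of_mul_monic_left (hq ▸ Pq_monic)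
    have hql : q = X + C (q.coeff 0) := hqmonic.eq_X_add_C hdq
    have heval : Pq.eval (-(q.coeff 0)) = 0 := by
      rw [hq, eval_mul, hql]
      simp
    rw [Pq_eq] at heval
    simp only [eval_add, eval_pow, eval_mul, eval_X, eval_ofNat] at heval
    exact no_rat_root_quartic _ heval

/- ### group theory endgame -/

lemma range_le_alt : Pi.range ≤ alternatingGroup (Fin 4) := by
  rintro x ⟨σ, rfl⟩
  exact Pi_mem_alternating σ

lemma card_alt : Nat.card (alternatingGroup (Fin 4)) = 12 := by
  rw [Nat.card_eq_fintype_card]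
  have h := two_mul_card_alternatingGroup (α := Fin 4)
  have h24 : Fintype.card (Equiv.Perm (Fin 4)) = 24 := by
    simp [Fintype.card_perm]; rfl
  omega

lemma swap_mul_swap_mem {a b c d : Fin 4} (hab : a ≠ b) (hcd : c ≠ d) :
    Equiv.swap a b * Equiv.swap c d ∈ alternatingGroup (Fin 4) := by
  rw [Equiv.Perm.mem_alternatingGroup, Equiv.Perm.sign_mul, Equiv.Perm.sign_swap hab,
    Equiv.Perm.sign_swap hcd]
  norm_num

lemma card_ne_six : Nat.card Pi.range ≠ 6 := by
  intro h6
  have hle := range_le_alt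
  have hKcard : Nat.card (Pi.range.subgroupOf (alternatingGroup (Fin 4))) = 6 := by
    rw [Nat.card_congr (Subgroup.subgroupOfEquivOfLe hle).toEquiv]
    exact h6
  have hmul := Subgroup.card_mul_index (Pi.range.subgroupOf (alternatingGroup (Fin 4)))
  rw [hKcard, card_alt] at hmul
  have hidx : (Pi.range.subgroupOf (alternatingGroup (Fin 4))).index = 2 := by omega
  have hsq : ∀ x : Equiv.Perm (Fin 4), x ∈ alternatingGroup (Fin 4) → x * x ∈ Pi.range := by
    intro x hx
    have h := Subgroup.mul_self_mem_of_index_two hidx ⟨x, hx⟩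
    rwa [Subgroup.mem_subgroupOf] at h
  have hmem : ∀ y : Equiv.Perm (Fin 4), y ∈ alternatingGroup (Fin 4) → y ^ 3 = 1 →
      y ∈ Pi.range := by
    intro y hy h3
    have h := hsq (y * y) (mul_mem hy hy)
    have hyy : (y * y) * (y * y) = y := by
      have hx : y ^ 3 * y = (y * y) * (y * y) := by rw [pow_succ, pow_two, mul_assoc]
      rw [← hx, h3, one_mul]
    rwa [hyy] at h
  set S : Finset (Equiv.Perm (Fin 4)) :=
    {1, Equiv.swap 0 1 * Equiv.swap 0 2, Equiv.swap 0 2 * Equiv.swap 0 1,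
     Equiv.swap 0 1 * Equiv.swap 0 3, Equiv.swap 0 3 * Equiv.swap 0 1,
     Equiv.swap 0 2 * Equiv.swap 0 3, Equiv.swap 0 3 * Equiv.swap 0 2,
     Equiv.swap 1 2 * Equiv.swap 1 3, Equiv.swap 1 3 * Equiv.swap 1 2} with hS
  have hScard : S.card = 9 := by decide
  have hSsub : (S : Set (Equiv.Perm (Fin 4))) ⊆ (Pi.range : Set (Equiv.Perm (Fin 4))) := by
    intro y hy
    simp only [hS, Finset.coe_insert, Set.mem_insert_iff, Finset.coe_singleton,
      Set.mem_singleton_iff] at hy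
    rcases hy with rfl | rfl | rfl | rfl | rfl | rfl | rfl | rfl | rfl
    · exact hmem _ (one_mem _) (one_pow _)
    all_goals exact hmem _ (swap_mul_swap_mem (by decide) (by decide)) (by decide)
  have hcontra : (9 : ℕ) ≤ 6 := by
    calc (9 : ℕ) = S.card := hScard.symm
    _ = (S : Set (Equiv.Perm (Fin 4))).ncard := (Set.ncard_coe_finset S).symm
    _ ≤ ((Pi.range : Subgroup (Equiv.Perm (Fin 4))) : Set (Equiv.Perm (Fin 4))).ncard :=
        Set.ncard_le_ncard hSsub (Set.toFinite _)
    _ = Nat.card Pi.range := (Nat.card_coe_set_eq _).symm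
    _ = 6 := h6
  omega

lemma card_range_eq_twelve : Nat.card Pi.range = 12 := by
  have h1 : Nat.card Pq.Gal = Nat.card Pi.range :=
    Nat.card_congr (MonoidHom.ofInjective Pi_inj).toEquiv
  have h2 : Nat.card Pq.Gal = Module.finrank ℚ Lf := by
    rw [Polynomial.Gal.card_of_separable Pq_sep]
  have hdvd : Nat.card Pi.range ∣ 12 := by
    have h := Subgroup.card_dvd_of_le range_le_alt
    rwa [card_alt] at h
  have h3 : 3 ∣ Nat.card Pi.range := by rw [← h1, h2]; exact three_dvd_finrank
  have hne3 : Nat.card Pi.range ≠ 3 := by rw [← h1, h2]; exact finrank_ne_three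
  have hne6 := card_ne_six
  have hle12 : Nat.card Pi.range ≤ 12 := Nat.le_of_dvd (by norm_num) hdvd
  interval_cases h : (Nat.card Pi.range) <;> omega

lemma range_eq_alt : Pi.range = alternatingGroup (Fin 4) :=
  Subgroup.eq_of_le_of_card_ge range_le_alt (by rw [card_alt, card_range_eq_twelve])

end

end A4GalAux

/-- The Galois group of `X^4 + 8X + 12` over `ℚ` is isomorphic to the alternating
group `A₄` on four letters. -/
theorem stmt_2 :
    Nonempty ((X ^ 4 + C (8 : ℚ) * X + C (12 : ℚ)).Gal ≃* alternatingGroup (Fin 4)) := by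
  exact ⟨(MonoidHom.ofInjective A4GalAux.Pi_inj).trans
    (MulEquiv.subgroupCongr A4GalAux.range_eq_alt)⟩
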